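/- The band distance is invariant under time-wise order-preserving transformations: let X be a finite set of observations with |X| ≥ 2, and for each t ∈ T let φ_t : ℝ → ℝ be strictly increasing. Let X′ = {φ∘x : x ∈ X}, where (φ∘x)(t) = φ_t(x(t)). Then for all x, y ∈ X, the band distance between φ∘x and φ∘y computed in the dataset X′ equals the band distance D_{xy} computed in X. In particular, for every band b of X determined by v, w and the corresponding band b′ of X′ determined by φ∘v, φ∘w, one has T^{b′}(φ∘x) = T^b(x) for every x ∈ X. -/

import Mathlib

open Finset
open scoped Classical

/-- The set of times at which observation `x` lies within the band determined by the
unordered pair `s` of observations: times `t` with `b_ℓ(t) ≤ x t ≤ b_u(t)`. -/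
noncomputable def timesInS {T : Type*} [Fintype T] (s : Sym2 (T → ℝ)) (x : T → ℝ) : Finset T :=
  Finset.univ.filter (fun t =>
    Sym2.lift ⟨fun v w => min (v t) (w t), fun v w => min_comm (v t) (w t)⟩ s ≤ x t ∧
    x t ≤ Sym2.lift ⟨fun v w => max (v t) (w t), fun v w => max_comm (v t) (w t)⟩ s)

/-- The set of bands of a dataset `X`: one band for each unordered pair of distinct
observations in `X`. -/
noncomputable def bands {T : Type*} [Fintype T] (X : Finset (T → ℝ)) : Finset (Sym2 (T → ℝ)) :=
  X.sym2.filter (fun s => ¬ s.IsDiag)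

/-- Bandwise (Jaccard) similarity of `x` and `y` with respect to the band `s`. -/
noncomputable def bandSimS {T : Type*} [Fintype T] (s : Sym2 (T → ℝ)) (x y : T → ℝ) : ℝ :=
  if timesInS s x ∪ timesInS s y = ∅ then 1
  else ((timesInS s x ∩ timesInS s y).card : ℝ) / ((timesInS s x ∪ timesInS s y).card : ℝ)

/-- Bandwise (Jaccard) distance of `x` and `y` with respect to the band `s`. -/
noncomputable def bandDistS {T : Type*} [Fintype T] (s : Sym2 (T → ℝ)) (x y : T → ℝ) : ℝ :=
  1 - bandSimS s x y

/-- `B_{xy}`: the set of bands of `X` containing `x` or `y` at some time. -/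
noncomputable def Bxy {T : Type*} [Fintype T] (X : Finset (T → ℝ)) (x y : T → ℝ) :
    Finset (Sym2 (T → ℝ)) :=
  (bands X).filter (fun s => timesInS s x ∪ timesInS s y ≠ ∅)

/-- The band distance `D_{xy}`: the average bandwise distance over all bands in `B_{xy}`. -/
noncomputable def bandD {T : Type*} [Fintype T] (X : Finset (T → ℝ)) (x y : T → ℝ) : ℝ :=
  (1 / ((Bxy X x y).card : ℝ)) * ∑ s ∈ Bxy X x y, bandDistS s x y

section Helpers

variable {T : Type*} [Fintype T]

lemma timesInS_map (φ : T → ℝ → ℝ) (hφ : ∀ t : T, StrictMono (φ t))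
    (s : Sym2 (T → ℝ)) (x : T → ℝ) :
    timesInS (s.map (fun u : T → ℝ => fun t => φ t (u t))) (fun t => φ t (x t))
      = timesInS s x := by
  induction s using Sym2.ind with
  | _ v w =>
    ext t
    have hmin : min (φ t (v t)) (φ t (w t)) = φ t (min (v t) (w t)) :=
      ((hφ t).monotone.map_min).symm
    have hmax : max (φ t (v t)) (φ t (w t)) = φ t (max (v t) (w t)) :=
      ((hφ t).monotone.map_max).symm
    simp only [timesInS, Sym2.map_pair_eq, Sym2.lift_mk, Finset.mem_filter,
      Finset.mem_univ, true_and]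
    rw [hmin, hmax, (hφ t).le_iff_le, (hφ t).le_iff_le]
    simp [Finset.mem_filter]

lemma Phi_injective (φ : T → ℝ → ℝ) (hφ : ∀ t : T, StrictMono (φ t)) :
    Function.Injective (fun u : T → ℝ => fun t => φ t (u t)) := by
  intro u v h
  funext t
  exact (hφ t).injective (congrFun h t)

lemma sym2_image (φ : T → ℝ → ℝ) (hφ : ∀ t : T, StrictMono (φ t)) (X : Finset (T → ℝ)) :
    (X.image (fun u : T → ℝ => fun t => φ t (u t))).sym2
      = X.sym2.image (Sym2.map (fun u : T → ℝ => fun t => φ t (u t))) := by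
  ext s
  induction s using Sym2.ind with
  | _ a b =>
    simp only [Finset.mk_mem_sym2_iff, Finset.mem_image, Finset.mem_image]
    constructor
    · rintro ⟨⟨a', ha', rfl⟩, ⟨b', hb', rfl⟩⟩
      exact ⟨s(a', b'), by simp [Finset.mk_mem_sym2_iff, ha', hb'], by simp⟩
    · rintro ⟨s, hs, hmap⟩
      induction s using Sym2.ind with
      | _ a' b' =>
        simp only [Finset.mk_mem_sym2_iff] at hs
        rw [Sym2.map_pair_eq, Sym2.eq_iff] at hmap
        rcases hmap with ⟨h1, h2⟩ | ⟨h1, h2⟩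
        · exact ⟨⟨a', hs.1, h1⟩, ⟨b', hs.2, h2⟩⟩
        · exact ⟨⟨b', hs.2, h2⟩, ⟨a', hs.1, h1⟩⟩

lemma bands_image (φ : T → ℝ → ℝ) (hφ : ∀ t : T, StrictMono (φ t)) (X : Finset (T → ℝ)) :
    bands (X.image (fun u : T → ℝ => fun t => φ t (u t)))
      = (bands X).image (Sym2.map (fun u : T → ℝ => fun t => φ t (u t))) := by
  unfold bands
  rw [sym2_image φ hφ, Finset.filter_image]
  congr 1
  apply Finset.filter_congr
  intro s _
  induction s using Sym2.ind with
  | _ a b =>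
    simp only [Function.comp_apply, Sym2.map_pair_eq, Sym2.isDiag_iff_proj_eq]
    constructor
    · intro h he; exact h (he ▸ rfl)
    · intro h he; exact h (Phi_injective φ hφ he)

lemma Bxy_image (φ : T → ℝ → ℝ) (hφ : ∀ t : T, StrictMono (φ t)) (X : Finset (T → ℝ))
    (x y : T → ℝ) :
    Bxy (X.image (fun u : T → ℝ => fun t => φ t (u t)))
        (fun t => φ t (x t)) (fun t => φ t (y t))
      = (Bxy X x y).image (Sym2.map (fun u : T → ℝ => fun t => φ t (u t))) := by
  unfold Bxy
  rw [bands_image φ hφ, Finset.filter_image]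
  congr 1
  apply Finset.filter_congr
  intro s _
  simp only [Function.comp_apply, timesInS_map φ hφ]

lemma bandDistS_map (φ : T → ℝ → ℝ) (hφ : ∀ t : T, StrictMono (φ t))
    (s : Sym2 (T → ℝ)) (x y : T → ℝ) :
    bandDistS (s.map (fun u : T → ℝ => fun t => φ t (u t)))
        (fun t => φ t (x t)) (fun t => φ t (y t)) = bandDistS s x y := by
  unfold bandDistS bandSimS
  rw [timesInS_map φ hφ, timesInS_map φ hφ]

end Helpers

/-- The band distance is invariant under time-wise order-preserving transformations: if
`φ t : ℝ → ℝ` is strictly increasing for each time `t`, and `X'` is the image of the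
dataset `X` under `x ↦ (fun t => φ t (x t))`, then the band distance in `X'` between the
transformed observations equals the band distance in `X` between the originals; and
moreover each transformed band contains a transformed observation at exactly the same
times as the original band contains the original observation. -/
theorem bandD_invariant_of_strictMono {T : Type*} [Fintype T] [Nonempty T]
    (X : Finset (T → ℝ)) (hX : 2 ≤ X.card)
    (φ : T → ℝ → ℝ) (hφ : ∀ t : T, StrictMono (φ t)) :
    (∀ x ∈ X, ∀ y ∈ X,
      bandD (X.image (fun u : T → ℝ => fun t => φ t (u t)))
          (fun t => φ t (x t)) (fun t => φ t (y t))
        = bandD X x y) ∧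
    (∀ v ∈ X, ∀ w ∈ X, ∀ x ∈ X,
      timesInS s((fun t => φ t (v t)), (fun t => φ t (w t))) (fun t => φ t (x t))
        = timesInS s(v, w) x) := by
  have hΦinj := Phi_injective φ hφ
  constructor
  · intro x hx y hy
    unfold bandD
    rw [Bxy_image φ hφ, Finset.card_image_of_injective _ (Sym2.map.injective hΦinj),
      Finset.sum_image (fun a _ b _ h => Sym2.map.injective hΦinj h)]
    congr 1
    apply Finset.sum_congr rfl
    intro s _
    exact bandDistS_map φ hφ s x y
  · intro v _ w _ x _
    have := timesInS_map φ hφ s(v, w) x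
    rwa [Sym2.map_pair_eq] at this
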